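/- Let q be a prime power, f : F_q^k → S a function, d_d < d_f positive integers, and L = max_{α ∈ Im(f)} |f^{-1}(α)|. Then every (f : d_d, d_f)-FCC with redundancy r satisfies q^{k−1}(q−1)(k + r) ≥ (L−1)·d_d + (q^k − L)·d_f. In particular, r_f(k : d_d, d_f) ≥ ((L−1)d_d + (q^k − L)d_f) / (q^{k−1}(q−1)) − k. -/
import Mathlib


/-- An `(f : d_d, d_f)`-FCC. -/
def IsFCC {F S : Type*} [Fintype F] [DecidableEq F] {k r : ℕ}
    (f : (Fin k → F) → S) (dd df : ℕ)
    (c : (Fin k → F) → (Fin (k + r) → F)) : Prop :=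
  (∀ u i, c u (Fin.castAdd r i) = u i) ∧
  (∀ u v, u ≠ v → dd ≤ hammingDist (c u) (c v)) ∧
  (∀ u v, f u ≠ f v → df ≤ hammingDist (c u) (c v))

/-- Cauchy–Schwarz fiber counting: for any function `g : V → F` on finite types,
`card V * card V ≤ card F * ∑_a (#fiber a)^2`. -/
lemma fiber_sq_bound {V F : Type*} [Fintype V] [DecidableEq V] [Fintype F] [DecidableEq F]
    (g : V → F) :
    Fintype.card V * Fintype.card V ≤
      Fintype.card F * ∑ a : F, (Finset.univ.filter fun u => g u = a).card *
        (Finset.univ.filter fun u => g u = a).card := by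
  have hsum : ∑ a : F, (Finset.univ.filter fun u => g u = a).card = Fintype.card V := by
    rw [← Finset.card_eq_sum_card_fiberwise (t := Finset.univ) (f := g)
      (fun x _ => Finset.mem_univ _), Finset.card_univ]
  have h := sq_sum_le_card_mul_sum_sq (s := (Finset.univ : Finset F))
    (f := fun a => ((Finset.univ.filter fun u => g u = a).card : ℤ))
  zify
  calc (Fintype.card V : ℤ) * (Fintype.card V) = (Fintype.card V : ℤ) ^ 2 := by ring
    _ = (∑ a : F, ((Finset.univ.filter fun u => g u = a).card : ℤ)) ^ 2 := by
        rw [← Nat.cast_sum, hsum]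
    _ ≤ (Finset.univ.card : ℤ) * ∑ a : F, ((Finset.univ.filter fun u => g u = a).card : ℤ) ^ 2 :=
        h
    _ = (Fintype.card F : ℤ) * ∑ a : F, ((Finset.univ.filter fun u => g u = a).card : ℤ) *
          ((Finset.univ.filter fun u => g u = a).card : ℤ) := by
        rw [Finset.card_univ]
        congr 1
        exact Finset.sum_congr rfl fun a _ => sq _

/-- **Plotkin-type bound for FCCs.** With
`L = max_{α ∈ Im(f)} |f⁻¹(α)|` and `d_d < d_f`, every `(f : d_d, d_f)`-FCC with redundancy `r`
satisfies `q^{k−1}(q−1)(k+r) ≥ (L−1)d_d + (q^k − L)d_f`. -/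
theorem plotkin_bound_FCC
    {F S : Type*} [Field F] [Fintype F] [DecidableEq F] [DecidableEq S]
    {k : ℕ} (f : (Fin k → F) → S) (dd df : ℕ) (hdd : 1 ≤ dd) (hddf : dd < df)
    (L : ℕ)
    (hL : L = Finset.univ.sup fun u : Fin k → F =>
      (Finset.univ.filter fun v : Fin k → F => f v = f u).card)
    {r : ℕ} (c : (Fin k → F) → (Fin (k + r) → F)) (hc : IsFCC f dd df c) :
    (L - 1) * dd + (Fintype.card F ^ k - L) * df ≤
      Fintype.card F ^ (k - 1) * (Fintype.card F - 1) * (k + r) := by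
  classical
  obtain ⟨hsys, hdist_d, hdist_f⟩ := hc
  set q := Fintype.card F with hq
  have hq1 : 1 ≤ q := Fintype.card_pos
  have hcardV : Fintype.card (Fin k → F) = q ^ k := by
    simp [hq]
  set N := q ^ k with hN
  have hN1 : 1 ≤ N := Nat.one_le_pow _ _ hq1
  -- basic facts about L
  have hL1 : 1 ≤ L := by
    rw [hL]
    obtain ⟨u⟩ : Nonempty (Fin k → F) := inferInstance
    refine le_trans ?_ (Finset.le_sup (Finset.mem_univ u))
    rw [Nat.one_le_iff_ne_zero, ← Nat.pos_iff_ne_zero, Finset.card_pos]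
    exact ⟨u, by simp⟩
  have hLN : L ≤ N := by
    rw [hL]
    apply Finset.sup_le
    intro u _
    calc (Finset.univ.filter fun v : Fin k → F => f v = f u).card
        ≤ (Finset.univ : Finset (Fin k → F)).card := Finset.card_filter_le _ _
      _ = N := by rw [Finset.card_univ, hcardV]
  -- total distance sum
  set A := ∑ u : Fin k → F, ∑ v : Fin k → F, hammingDist (c u) (c v) with hA
  -- Lower bound on A
  have lower : N * ((L - 1) * dd + (N - L) * df) ≤ A := by
    rw [hA]
    calc N * ((L - 1) * dd + (N - L) * df)
        = ∑ _u : Fin k → F, ((L - 1) * dd + (N - L) * df) := by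
          rw [Finset.sum_const, smul_eq_mul, Finset.card_univ, hcardV]
      _ ≤ _ := by
        refine Finset.sum_le_sum fun u _ => ?_
        set m := (Finset.univ.filter fun v : Fin k → F => f v = f u).card with hm
        have hm1 : 1 ≤ m := by
          rw [hm, Nat.one_le_iff_ne_zero, ← Nat.pos_iff_ne_zero, Finset.card_pos]
          exact ⟨u, by simp⟩
        have hmL : m ≤ L := by
          rw [hL, hm]
          exact Finset.le_sup
            (f := fun u : Fin k → F =>
              (Finset.univ.filter fun v : Fin k → F => f v = f u).card)
            (Finset.mem_univ u)
        set s1 := Finset.univ.filter fun v : Fin k → F => f v = f u ∧ v ≠ u with hs1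
        set s2 := Finset.univ.filter fun v : Fin k → F => f v ≠ f u with hs2
        have hdisj : Disjoint s1 s2 := by
          rw [Finset.disjoint_filter]
          tauto
        have hcard1 : s1.card = m - 1 := by
          have heq : (Finset.univ.filter fun v : Fin k → F => f v = f u) = insert u s1 := by
            ext v
            simp only [hs1, Finset.mem_filter, Finset.mem_univ, true_and, Finset.mem_insert]
            constructor
            · intro h
              by_cases hv : v = u
              · exact Or.inl hv
              · exact Or.inr ⟨h, hv⟩
            · rintro (rfl | ⟨h1, _⟩)
              · rfl
              · exact h1
          have hu : u ∉ s1 := by simp [hs1]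
          have := congrArg Finset.card heq
          rw [Finset.card_insert_of_notMem hu] at this
          omega
        have hcard2 : s2.card = N - m := by
          rw [hs2, Finset.filter_not, Finset.card_sdiff_of_subset (Finset.filter_subset _ _),
            Finset.card_univ, hcardV, ← hm]
        have step1 : s1.card * dd + s2.card * df ≤ ∑ v ∈ s1 ∪ s2, hammingDist (c u) (c v) := by
          rw [Finset.sum_union hdisj]
          gcongr
          · calc s1.card * dd = ∑ _v ∈ s1, dd := by rw [Finset.sum_const, smul_eq_mul]
              _ ≤ _ := Finset.sum_le_sum fun v hv => by
                  rw [hs1, Finset.mem_filter] at hv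
                  exact hdist_d u v (Ne.symm hv.2.2)
          · calc s2.card * df = ∑ _v ∈ s2, df := by rw [Finset.sum_const, smul_eq_mul]
              _ ≤ _ := Finset.sum_le_sum fun v hv => by
                  rw [hs2, Finset.mem_filter] at hv
                  exact hdist_f u v (Ne.symm hv.2)
        have step2 : ∑ v ∈ s1 ∪ s2, hammingDist (c u) (c v) ≤
            ∑ v : Fin k → F, hammingDist (c u) (c v) :=
          Finset.sum_le_sum_of_subset (Finset.subset_univ _)
        have step0 : (L - 1) * dd + (N - L) * df ≤ (m - 1) * dd + (N - m) * df := by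
          have e1 : L - 1 = (m - 1) + (L - m) := by omega
          have e2 : N - m = (N - L) + (L - m) := by omega
          rw [e1, e2, Nat.add_mul, Nat.add_mul]
          have : (L - m) * dd ≤ (L - m) * df := Nat.mul_le_mul_left _ hddf.le
          omega
        calc (L - 1) * dd + (N - L) * df ≤ (m - 1) * dd + (N - m) * df := step0
          _ = s1.card * dd + s2.card * df := by rw [hcard1, hcard2]
          _ ≤ _ := step1.trans step2
  -- Upper bound on q * A
  have upper : q * A ≤ (k + r) * ((q - 1) * (N * N)) := by
    have hdist : ∀ u v : Fin k → F, hammingDist (c u) (c v) =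
        ∑ i : Fin (k + r), (if c u i ≠ c v i then 1 else 0) := by
      intro u v
      rw [hammingDist, Finset.card_filter]
    have hA2 : A = ∑ i : Fin (k + r), ∑ u : Fin k → F, ∑ v : Fin k → F,
        (if c u i ≠ c v i then 1 else 0) := by
      rw [hA]
      calc ∑ u : Fin k → F, ∑ v : Fin k → F, hammingDist (c u) (c v)
          = ∑ u : Fin k → F, ∑ i : Fin (k + r), ∑ v : Fin k → F,
              (if c u i ≠ c v i then 1 else 0) := by
            refine Finset.sum_congr rfl fun u _ => ?_
            rw [Finset.sum_congr rfl fun v _ => hdist u v]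
            exact Finset.sum_comm
        _ = _ := Finset.sum_comm
    rw [hA2, Finset.mul_sum]
    calc ∑ i : Fin (k + r), q * (∑ u : Fin k → F, ∑ v : Fin k → F,
            (if c u i ≠ c v i then 1 else 0))
        ≤ ∑ _i : Fin (k + r), (q - 1) * (N * N) := by
          refine Finset.sum_le_sum fun i _ => ?_
          set g : (Fin k → F) → F := fun u => c u i with hg
          set m : F → ℕ := fun a => (Finset.univ.filter fun u => g u = a).card with hmdef
          set E := ∑ a : F, m a * m a with hE
          set T := ∑ u : Fin k → F, ∑ v : Fin k → F,
            (if c u i ≠ c v i then 1 else 0) with hT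
          have hTE : T + E = N * N := by
            have hTalt : T = ∑ u : Fin k → F,
                (Finset.univ.filter fun v : Fin k → F => ¬ (g v = g u)).card := by
              rw [hT]
              refine Finset.sum_congr rfl fun u _ => ?_
              rw [Finset.card_filter]
              refine Finset.sum_congr rfl fun v _ => ?_
              simp only [hg, ne_eq, eq_comm]
            have hEalt : E = ∑ u : Fin k → F,
                (Finset.univ.filter fun v : Fin k → F => g v = g u).card := by
              rw [hE, ← Finset.sum_fiberwise_of_maps_to (g := g) (t := Finset.univ)
                (fun x _ => Finset.mem_univ _)
                (fun u => (Finset.univ.filter fun v : Fin k → F => g v = g u).card)]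
              refine Finset.sum_congr rfl fun a _ => ?_
              rw [Finset.sum_congr rfl fun u hu => ?_, Finset.sum_const, smul_eq_mul, hmdef]
              rw [Finset.mem_filter] at hu
              rw [hu.2]
            rw [hTalt, hEalt, ← Finset.sum_add_distrib]
            have hcomb : ∀ u : Fin k → F,
                (Finset.univ.filter fun v : Fin k → F => ¬ (g v = g u)).card +
                (Finset.univ.filter fun v : Fin k → F => g v = g u).card = N := by
              intro u
              rw [Finset.filter_not, Finset.card_sdiff_of_subset (Finset.filter_subset _ _),
                Finset.card_univ, hcardV]
              have : (Finset.univ.filter fun v : Fin k → F => g v = g u).card ≤ N := by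
                rw [← hcardV, ← Finset.card_univ]
                exact Finset.card_filter_le _ _
              omega
            rw [Finset.sum_congr rfl fun u _ => hcomb u, Finset.sum_const, smul_eq_mul,
              Finset.card_univ, hcardV]
          have hCS : N * N ≤ q * E := by
            rw [hE, hmdef, hq, ← hcardV]
            exact fiber_sq_bound g
          have key : q * T + N * N ≤ q * T + q * E := by omega
          rw [← Nat.mul_add, hTE] at key
          have hsplit : (q - 1) * (N * N) + N * N = q * (N * N) := by
            have : N * N ≤ q * (N * N) := Nat.le_mul_of_pos_left _ hq1
            rw [Nat.sub_one_mul]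
            omega
          omega
      _ = (k + r) * ((q - 1) * (N * N)) := by
          rw [Finset.sum_const, smul_eq_mul, Finset.card_univ, Fintype.card_fin]
  -- combine
  rcases Nat.eq_zero_or_pos k with hk | hk
  · subst hk
    have hN0 : N = 1 := by rw [hN, pow_zero]
    have hLeq : L = 1 := by omega
    have h0 : (L - 1) * dd + (N - L) * df = 0 := by rw [hLeq, hN0]; simp
    rw [h0]
    exact Nat.zero_le _
  · have hNsplit : N = q * q ^ (k - 1) := by
      rw [hN, ← pow_succ']
      congr 1
      omega
    have main : q * N * ((L - 1) * dd + (N - L) * df) ≤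
        q * N * (q ^ (k - 1) * (q - 1) * (k + r)) := by
      calc q * N * ((L - 1) * dd + (N - L) * df)
          = q * (N * ((L - 1) * dd + (N - L) * df)) := by ring
        _ ≤ q * A := Nat.mul_le_mul_left q lower
        _ ≤ (k + r) * ((q - 1) * (N * N)) := upper
        _ = q * N * (q ^ (k - 1) * (q - 1) * (k + r)) := by
            rw [hNsplit]; ring
    have hpos : 0 < q * N := Nat.mul_pos hq1 hN1
    exact Nat.le_of_mul_le_mul_left main hpos
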